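/- For every β₀ > 0 and every k > 1 there exists a constant C = C(β₀,k) > 0 such that for all 0 < β ≤ β₀ and all x ≥ 0 one has (x²+1)^{k/2} · ∫_0^x (y²+1)^{-k/2} e^{-β(x-y)} dy ≤ C β^{-k}. -/

import Mathlib

lemma aux_tk (k β t : ℝ) (hk : 0 < k) (hβ : 0 < β) (ht : 0 ≤ t) :
    t ^ k * Real.exp (-(β * t)) ≤ k ^ k * β ^ (-k) := by
  have hbt : 0 ≤ β * t / k := by positivity
  have h1 : β * t / k ≤ Real.exp (β * t / k) := by
    have := Real.add_one_le_exp (β * t / k); linarith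
  have h2 : (β * t / k) ^ k ≤ Real.exp (β * t) := by
    calc (β * t / k) ^ k ≤ Real.exp (β * t / k) ^ k :=
          Real.rpow_le_rpow hbt h1 hk.le
      _ = Real.exp (β * t) := by
          rw [← Real.exp_mul]; field_simp
  have h3 : (β * t / k) ^ k = β ^ k * t ^ k / k ^ k := by
    rw [Real.div_rpow (by positivity) hk.le, Real.mul_rpow hβ.le ht]
  rw [h3] at h2
  have hβk : (0:ℝ) < β ^ k := Real.rpow_pos_of_pos hβ k
  have hkk : (0:ℝ) < k ^ k := Real.rpow_pos_of_pos hk k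
  have h4 : t ^ k ≤ k ^ k * β ^ (-k) * Real.exp (β * t) := by
    rw [Real.rpow_neg hβ.le]
    rw [div_le_iff₀ hkk] at h2
    calc t ^ k = β ^ k * t ^ k / β ^ k := by field_simp
      _ ≤ Real.exp (β * t) * k ^ k / β ^ k := by gcongr
      _ = k ^ k * (β ^ k)⁻¹ * Real.exp (β * t) := by ring
  calc t ^ k * Real.exp (-(β * t))
      ≤ (k ^ k * β ^ (-k) * Real.exp (β * t)) * Real.exp (-(β * t)) := by
        apply mul_le_mul_of_nonneg_right h4 (Real.exp_nonneg _)
    _ = k ^ k * β ^ (-k) := by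
        rw [mul_assoc, ← Real.exp_add]; simp

lemma aux_ratio (k x y : ℝ) (hk : 0 ≤ k) (hy : 0 ≤ y) (hyx : y ≤ x) :
    (x ^ 2 + 1) ^ (k / 2) ≤ 2 ^ k * ((y ^ 2 + 1) ^ (k / 2) + (x - y) ^ k) := by
  set t := x - y with hts
  have ht : 0 ≤ t := by simp [hts]; linarith
  have h1 : x ^ 2 + 1 ≤ 2 * ((y ^ 2 + 1) + t ^ 2) := by
    have : x = y + t := by rw [hts]; ring
    nlinarith [sq_nonneg (y - t)]
  have hk2 : 0 ≤ k / 2 := by linarith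
  have step1 : (x ^ 2 + 1) ^ (k / 2) ≤ (2 * ((y ^ 2 + 1) + t ^ 2)) ^ (k / 2) :=
    Real.rpow_le_rpow (by positivity) h1 hk2
  have step2 : (2 * ((y ^ 2 + 1) + t ^ 2)) ^ (k / 2)
      = 2 ^ (k / 2) * ((y ^ 2 + 1) + t ^ 2) ^ (k / 2) :=
    Real.mul_rpow (by norm_num) (by positivity)
  have hmax : (y ^ 2 + 1) + t ^ 2 ≤ 2 * max (y ^ 2 + 1) (t ^ 2) := by
    rcases le_total (y ^ 2 + 1) (t ^ 2) with h | h
    · rw [max_eq_right h]; linarith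
    · rw [max_eq_left h]; linarith
  have hmaxpos : (0:ℝ) ≤ max (y ^ 2 + 1) (t ^ 2) := le_max_of_le_right (by positivity)
  have step3 : ((y ^ 2 + 1) + t ^ 2) ^ (k / 2)
      ≤ 2 ^ (k / 2) * ((y ^ 2 + 1) ^ (k / 2) + (t ^ 2) ^ (k / 2)) := by
    calc ((y ^ 2 + 1) + t ^ 2) ^ (k / 2)
        ≤ (2 * max (y ^ 2 + 1) (t ^ 2)) ^ (k / 2) :=
          Real.rpow_le_rpow (by positivity) hmax hk2
      _ = 2 ^ (k / 2) * (max (y ^ 2 + 1) (t ^ 2)) ^ (k / 2) :=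
          Real.mul_rpow (by norm_num) hmaxpos
      _ ≤ 2 ^ (k / 2) * ((y ^ 2 + 1) ^ (k / 2) + (t ^ 2) ^ (k / 2)) := by
          apply mul_le_mul_of_nonneg_left _ (by positivity)
          rcases le_total (y ^ 2 + 1) (t ^ 2) with h | h
          · rw [max_eq_right h]
            have : (0:ℝ) ≤ (y ^ 2 + 1) ^ (k / 2) := by positivity
            linarith
          · rw [max_eq_left h]
            have : (0:ℝ) ≤ (t ^ 2) ^ (k / 2) := Real.rpow_nonneg (by positivity) _
            linarith
  have ht2 : (t ^ 2) ^ (k / 2) = t ^ k := by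
    rw [← Real.rpow_natCast t 2, ← Real.rpow_mul ht]
    norm_num
    congr 1; ring
  have h22 : (2:ℝ) ^ (k / 2) * 2 ^ (k / 2) = 2 ^ k := by
    rw [← Real.rpow_add (by norm_num)]; ring_nf
  calc (x ^ 2 + 1) ^ (k / 2)
      ≤ 2 ^ (k / 2) * ((y ^ 2 + 1) + t ^ 2) ^ (k / 2) := step1.trans_eq step2
    _ ≤ 2 ^ (k / 2) * (2 ^ (k / 2) * ((y ^ 2 + 1) ^ (k / 2) + (t ^ 2) ^ (k / 2))) := by
        apply mul_le_mul_of_nonneg_left step3 (by positivity)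
    _ = 2 ^ k * ((y ^ 2 + 1) ^ (k / 2) + (x - y) ^ k) := by
        rw [ht2, ← mul_assoc, h22]

lemma aux_weight (k y : ℝ) (hk : 0 ≤ k) (hy : 0 ≤ y) :
    (y ^ 2 + 1) ^ (-k / 2) ≤ 2 ^ (k / 2) * (1 + y) ^ (-k) := by
  have h1 : (1 + y) ^ 2 ≤ 2 * (y ^ 2 + 1) := by nlinarith [sq_nonneg (y - 1)]
  have h1y : (0:ℝ) < 1 + y := by linarith
  have h2 : (1 + y) ^ k ≤ 2 ^ (k / 2) * (y ^ 2 + 1) ^ (k / 2) := by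
    have : (1 + y) ^ k = ((1 + y) ^ 2) ^ (k / 2) := by
      rw [← Real.rpow_natCast (1 + y) 2, ← Real.rpow_mul h1y.le]
      norm_num
      congr 1; ring
    rw [this, ← Real.mul_rpow (by norm_num) (by positivity)]
    exact Real.rpow_le_rpow (by positivity) h1 (by linarith)
  have hyk : (0:ℝ) < (1 + y) ^ k := Real.rpow_pos_of_pos h1y k
  have hwk : (0:ℝ) < (y ^ 2 + 1) ^ (k / 2) := Real.rpow_pos_of_pos (by positivity) _
  have key : ((y ^ 2 + 1) ^ (k / 2))⁻¹ ≤ 2 ^ (k / 2) * ((1 + y) ^ k)⁻¹ := by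
    rw [inv_le_iff_one_le_mul₀ hwk]
    calc (1:ℝ) = (1 + y) ^ k / (1 + y) ^ k := by field_simp
      _ ≤ (2 ^ (k / 2) * (y ^ 2 + 1) ^ (k / 2)) / (1 + y) ^ k := by gcongr
      _ = 2 ^ (k / 2) * ((1 + y) ^ k)⁻¹ * (y ^ 2 + 1) ^ (k / 2) := by ring
  rw [Real.rpow_neg h1y.le, neg_div, Real.rpow_neg (by positivity)]
  exact key

lemma aux_int_exp (β x : ℝ) (hβ : 0 < β) (hx : 0 ≤ x) :
    ∫ y in (0:ℝ)..x, Real.exp (-β * (x - y)) ≤ 1 / β := by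
  have hder : ∀ y ∈ Set.uIcc (0:ℝ) x,
      HasDerivAt (fun y => Real.exp (-β * (x - y)) / β) (Real.exp (-β * (x - y))) y := by
    intro y _
    have h1 : HasDerivAt (fun y : ℝ => -β * (x - y)) β y := by
      have := ((hasDerivAt_id y).const_sub x).const_mul (-β)
      simpa using this
    have h2 := (h1.exp).div_const β
    refine h2.congr_deriv ?_
    rw [mul_div_assoc, div_self hβ.ne', mul_one]
  have hcont : IntervalIntegrable (fun y => Real.exp (-β * (x - y)))
      MeasureTheory.volume 0 x :=
    (Continuous.intervalIntegrable (by continuity) _ _)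
  rw [intervalIntegral.integral_eq_sub_of_hasDerivAt hder hcont]
  have h3 : Real.exp (-β * (x - x)) = 1 := by norm_num
  rw [h3]
  have : 0 ≤ Real.exp (-β * (x - 0)) / β := by positivity
  linarith

lemma aux_int_pow (k x : ℝ) (hk : 1 < k) (hx : 0 ≤ x) :
    ∫ y in (0:ℝ)..x, (1 + y) ^ (-k) ≤ 1 / (k - 1) := by
  have hk1 : (1:ℝ) - k ≠ 0 := by intro h; linarith
  have hder : ∀ y ∈ Set.uIcc (0:ℝ) x,
      HasDerivAt (fun y => (1 + y) ^ (1 - k) / (1 - k)) ((1 + y) ^ (-k)) y := by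
    intro y hy
    rw [Set.uIcc_of_le hx] at hy
    have h1y : (0:ℝ) < 1 + y := by have := hy.1; linarith
    have h1 : HasDerivAt (fun y : ℝ => 1 + y) 1 y := by
      simpa using (hasDerivAt_id y).const_add 1
    have h2 := (h1.rpow_const (p := 1 - k) (Or.inl h1y.ne')).div_const (1 - k)
    refine h2.congr_deriv ?_
    rw [show (1:ℝ) - k - 1 = -k by ring]
    field_simp
  have hcont : IntervalIntegrable (fun y => (1 + y) ^ (-k)) MeasureTheory.volume 0 x := by
    apply ContinuousOn.intervalIntegrable
    apply ContinuousOn.rpow_const (by fun_prop)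
    intro y hy
    rw [Set.uIcc_of_le hx] at hy
    exact Or.inl (by have := hy.1; positivity)
  rw [intervalIntegral.integral_eq_sub_of_hasDerivAt hder hcont]
  have h0 : ((1:ℝ) + 0) ^ (1 - k) = 1 := by norm_num
  rw [h0]
  have hxk : (0:ℝ) ≤ (1 + x) ^ (1 - k) := Real.rpow_nonneg (by linarith) _
  have hk1' : (0:ℝ) < k - 1 := by linarith
  have heq : (1 + x) ^ (1 - k) / (1 - k) - 1 / (1 - k) = (1 - (1 + x) ^ (1 - k)) / (k - 1) := by
    field_simp
    ring
  rw [heq]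
  gcongr
  linarith

lemma aux_beta (β₀ k β : ℝ) (hβ : 0 < β) (hββ₀ : β ≤ β₀) (hk1 : 0 < k - 1) :
    1 / β ≤ β₀ ^ (k - 1) * β ^ (-k) := by
  rw [show -k = -(k-1) + -1 by ring, Real.rpow_add hβ, Real.rpow_neg_one]
  have h1 : 1 ≤ β₀ ^ (k - 1) * β ^ (-(k-1)) := by
    rw [Real.rpow_neg hβ.le, ← div_eq_mul_inv,
      one_le_div (Real.rpow_pos_of_pos hβ _)]
    exact Real.rpow_le_rpow hβ.le hββ₀ hk1.le
  calc 1 / β = 1 * β⁻¹ := by rw [one_mul, one_div]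
    _ ≤ (β₀ ^ (k - 1) * β ^ (-(k-1))) * β⁻¹ :=
        mul_le_mul_of_nonneg_right h1 (by positivity)
    _ = β₀ ^ (k - 1) * (β ^ (-(k-1)) * β⁻¹) := by ring

open MeasureTheory

/-- Lemma C.1 (iii), case `k > 1`: weighted exponential integral estimate on `[0, x]`. -/
theorem stmt_3 (β₀ k : ℝ) (hβ₀ : 0 < β₀) (hk : 1 < k) :
    ∃ C : ℝ, 0 < C ∧ ∀ β : ℝ, 0 < β → β ≤ β₀ → ∀ x : ℝ, 0 ≤ x →
      (x ^ 2 + 1) ^ (k / 2) *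
        (∫ y in (0:ℝ)..x, (y ^ 2 + 1) ^ (-k / 2) * Real.exp (-β * (x - y)))
      ≤ C * β ^ (-k) := by
  have hk0 : (0:ℝ) < k := by linarith
  have hk1 : (0:ℝ) < k - 1 := by linarith
  refine ⟨2 ^ k * β₀ ^ (k - 1) + 2 ^ (3 * k / 2) * k ^ k / (k - 1), by positivity, ?_⟩
  intro β hβ hββ₀ x hx
  set D : ℝ := 2 ^ (3 * k / 2) * k ^ k * β ^ (-k) with hD
  have hDpos : 0 < D := by rw [hD]; positivity
  -- pointwise bound on [0, x]
  have key : ∀ y ∈ Set.Icc (0:ℝ) x,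
      (x ^ 2 + 1) ^ (k / 2) * ((y ^ 2 + 1) ^ (-k / 2) * Real.exp (-β * (x - y)))
        ≤ 2 ^ k * Real.exp (-β * (x - y)) + D * (1 + y) ^ (-k) := by
    rintro y ⟨hy0, hyx⟩
    have hw : (0:ℝ) < y ^ 2 + 1 := by positivity
    have hE : (0:ℝ) < Real.exp (-β * (x - y)) := Real.exp_pos _
    have hratio := aux_ratio k x y hk0.le hy0 hyx
    have hcancel : (y ^ 2 + 1) ^ (k / 2) * (y ^ 2 + 1) ^ (-k / 2) = 1 := by
      rw [← Real.rpow_add hw, show k / 2 + -k / 2 = 0 by ring, Real.rpow_zero]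
    have htk : (x - y) ^ k * Real.exp (-β * (x - y)) ≤ k ^ k * β ^ (-k) := by
      have h := aux_tk k β (x - y) hk0 hβ (by linarith)
      rw [neg_mul]
      exact h
    have hwt := aux_weight k y hk0.le hy0
    calc (x ^ 2 + 1) ^ (k / 2) * ((y ^ 2 + 1) ^ (-k / 2) * Real.exp (-β * (x - y)))
        ≤ (2 ^ k * ((y ^ 2 + 1) ^ (k / 2) + (x - y) ^ k)) *
            ((y ^ 2 + 1) ^ (-k / 2) * Real.exp (-β * (x - y))) :=
          mul_le_mul_of_nonneg_right hratio (by positivity)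
      _ = 2 ^ k * ((y ^ 2 + 1) ^ (k / 2) * (y ^ 2 + 1) ^ (-k / 2)) * Real.exp (-β * (x - y))
          + 2 ^ k * (((x - y) ^ k * Real.exp (-β * (x - y))) * (y ^ 2 + 1) ^ (-k / 2)) := by
          ring
      _ = 2 ^ k * Real.exp (-β * (x - y))
          + 2 ^ k * (((x - y) ^ k * Real.exp (-β * (x - y))) * (y ^ 2 + 1) ^ (-k / 2)) := by
          rw [hcancel, mul_one]
      _ ≤ 2 ^ k * Real.exp (-β * (x - y))
          + 2 ^ k * ((k ^ k * β ^ (-k)) * (2 ^ (k / 2) * (1 + y) ^ (-k))) := by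
          refine add_le_add_right (mul_le_mul_of_nonneg_left ?_ (by positivity)) _
          exact mul_le_mul htk hwt (Real.rpow_nonneg hw.le _) (by positivity)
      _ = 2 ^ k * Real.exp (-β * (x - y)) + (2 ^ k * 2 ^ (k / 2)) * k ^ k * β ^ (-k) * (1 + y) ^ (-k) := by
          ring
      _ = 2 ^ k * Real.exp (-β * (x - y)) + D * (1 + y) ^ (-k) := by
          rw [← Real.rpow_add (by norm_num : (0:ℝ) < 2), show k + k / 2 = 3 * k / 2 by ring, hD]
  -- integrability
  have hcf : IntervalIntegrable
      (fun y => (x ^ 2 + 1) ^ (k / 2) * ((y ^ 2 + 1) ^ (-k / 2) * Real.exp (-β * (x - y))))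
      volume 0 x := by
    apply Continuous.intervalIntegrable
    apply Continuous.mul continuous_const
    apply Continuous.mul
    · exact Continuous.rpow_const (by continuity) (fun y => Or.inl (by positivity))
    · fun_prop
  have hcE : IntervalIntegrable (fun y => Real.exp (-β * (x - y))) volume 0 x :=
    Continuous.intervalIntegrable (by fun_prop) _ _
  have hcP : IntervalIntegrable (fun y => (1 + y) ^ (-k)) volume 0 x := by
    apply ContinuousOn.intervalIntegrable
    apply ContinuousOn.rpow_const (by fun_prop)
    intro y hy
    rw [Set.uIcc_of_le hx] at hy
    exact Or.inl (by have := hy.1; positivity)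
  have hcg : IntervalIntegrable
      (fun y => 2 ^ k * Real.exp (-β * (x - y)) + D * (1 + y) ^ (-k)) volume 0 x :=
    (hcE.const_mul _).add (hcP.const_mul _)
  calc (x ^ 2 + 1) ^ (k / 2) *
        (∫ y in (0:ℝ)..x, (y ^ 2 + 1) ^ (-k / 2) * Real.exp (-β * (x - y)))
      = ∫ y in (0:ℝ)..x,
          (x ^ 2 + 1) ^ (k / 2) * ((y ^ 2 + 1) ^ (-k / 2) * Real.exp (-β * (x - y))) :=
        (intervalIntegral.integral_const_mul _ _).symm
    _ ≤ ∫ y in (0:ℝ)..x, (2 ^ k * Real.exp (-β * (x - y)) + D * (1 + y) ^ (-k)) :=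
        intervalIntegral.integral_mono_on hx hcf hcg key
    _ = 2 ^ k * (∫ y in (0:ℝ)..x, Real.exp (-β * (x - y)))
        + D * (∫ y in (0:ℝ)..x, (1 + y) ^ (-k)) := by
        rw [intervalIntegral.integral_add (hcE.const_mul _) (hcP.const_mul _),
          intervalIntegral.integral_const_mul, intervalIntegral.integral_const_mul]
    _ ≤ 2 ^ k * (1 / β) + D * (1 / (k - 1)) := by
        exact add_le_add (mul_le_mul_of_nonneg_left (aux_int_exp β x hβ hx) (by positivity))
          (mul_le_mul_of_nonneg_left (aux_int_pow k x hk hx) hDpos.le)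
    _ ≤ 2 ^ k * (β₀ ^ (k - 1) * β ^ (-k)) + D * (1 / (k - 1)) := by
        exact add_le_add_left
          (mul_le_mul_of_nonneg_left (aux_beta β₀ k β hβ hββ₀ hk1) (by positivity)) _
    _ = (2 ^ k * β₀ ^ (k - 1) + 2 ^ (3 * k / 2) * k ^ k / (k - 1)) * β ^ (-k) := by
        rw [hD]; ring
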